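/- The jump preserves progressiveness: if a predicate P on ordinals below ε₀ is progressive (∀α, (∀β < α, P(β)) → P(α)), then the jump J[P](γ) := ∀β, ((∀δ < β, P(δ)) → (∀δ < β + ω^γ, P(δ))) is also progressive in γ. -/

import Mathlib

namespace SlowCon

/-- A predicate on ordinals is progressive. -/
def ProgOrd (P : Ordinal → Prop) : Prop := ∀ α, (∀ β < α, P β) → P α

/-- The Gentzen jump `J[P](γ) ≡ ∀β ((∀δ<β, P δ) → ∀δ < β + ω^γ, P δ)`. -/
def Jump (P : Ordinal → Prop) (γ : Ordinal) : Prop :=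
  ∀ β, (∀ δ < β, P δ) → ∀ δ < β + Ordinal.omega0 ^ γ, P δ

/-- Transfinite induction up to `α` for `Q`. -/
def TIOrd (α : Ordinal) (Q : Ordinal → Prop) : Prop := ProgOrd Q → ∀ β < α, Q β

/-- The ordinal ε₀, least fixed point of `x ↦ ω^x`. -/
noncomputable def epsilon0 : Ordinal := Ordinal.nfp (fun x => Ordinal.omega0 ^ x) 0

end SlowCon

/-- the Gentzen jump preserves progressiveness. -/
theorem stmt15 : ∀ P : Ordinal → Prop, SlowCon.ProgOrd P → SlowCon.ProgOrd (SlowCon.Jump P) := by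
  intro P hP γ IH β hβ
  rcases Ordinal.zero_or_succ_or_isSuccLimit γ with h0 | ⟨γ', rfl⟩ | hlim
  · subst h0
    intro δ hδ
    rw [Ordinal.opow_zero, Ordinal.add_one_eq_succ, Order.lt_succ_iff] at hδ
    rcases lt_or_eq_of_le hδ with h | h
    · exact hβ δ h
    · exact h ▸ hP β hβ
  · have key : ∀ n : ℕ, ∀ δ < β + Ordinal.omega0 ^ γ' * n, P δ := by
      intro n
      induction n with
      | zero => simpa using hβ
      | succ n ih =>
        intro δ hδ
        rw [Nat.cast_succ, mul_add, mul_one, ← add_assoc] at hδ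
        exact IH γ' (Order.lt_succ γ') _ ih δ hδ
    intro δ hδ
    have hne : Ordinal.omega0 ^ Order.succ γ' ≠ 0 :=
      (Ordinal.opow_pos _ Ordinal.omega0_pos).ne'
    rcases (Ordinal.lt_add_iff hne).1 hδ with ⟨d, hd, hδd⟩
    rw [Ordinal.opow_succ, Ordinal.lt_mul_iff_of_isSuccLimit Ordinal.isSuccLimit_omega0] at hd
    rcases hd with ⟨c, hc, hdc⟩
    rcases Ordinal.lt_omega0.1 hc with ⟨n, rfl⟩
    exact key n δ (hδd.trans_lt ((add_lt_add_iff_left β).2 hdc))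
  · intro δ hδ
    have hne : Ordinal.omega0 ^ γ ≠ 0 := (Ordinal.opow_pos _ Ordinal.omega0_pos).ne'
    rcases (Ordinal.lt_add_iff hne).1 hδ with ⟨d, hd, hδd⟩
    rcases (Ordinal.lt_opow_of_isSuccLimit Ordinal.omega0_ne_zero hlim).1 hd with ⟨γ', hγ', hdγ'⟩
    exact IH γ' hγ' β hβ δ (hδd.trans_lt ((add_lt_add_iff_left β).2 hdγ'))
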